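/- Let d > 0, c > 0 and 0 < α < 1 be real numbers, and let u : [0, d) → ℝ be a nonnegative, non-decreasing continuous function satisfying the functional inequality u(s) ≤ (c/(r − s))·(u(r))^{1−α} for all 0 ≤ s < r < d. Then u(0) ≤ (2^{α+1} c / ((2^α − 1) d))^{1/α}. -/

import Mathlib

/-- **Meyers' lemma**: if `u : [0, d) → ℝ` is a nonnegative, non-decreasing continuous function
satisfying `u(s) ≤ (c/(r − s)) · u(r)^{1−α}` for all `0 ≤ s < r < d` (with constants `c > 0`,
`0 < α < 1`), then `u(0) ≤ (2^{α+1} c / ((2^α − 1) d))^{1/α}`. -/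
theorem meyers_lemma (d c α : ℝ) (hd : 0 < d) (hc : 0 < c) (hα0 : 0 < α) (hα1 : α < 1)
    (u : ℝ → ℝ)
    (h_cont : ContinuousOn u (Set.Ico 0 d))
    (h_nonneg : ∀ s ∈ Set.Ico (0 : ℝ) d, 0 ≤ u s)
    (h_mono : ∀ s ∈ Set.Ico (0 : ℝ) d, ∀ r ∈ Set.Ico (0 : ℝ) d, s ≤ r → u s ≤ u r)
    (h_ineq : ∀ s r : ℝ, 0 ≤ s → s < r → r < d → u s ≤ c / (r - s) * u r ^ (1 - α)) :
    u 0 ≤ (2 ^ (α + 1) * c / ((2 ^ α - 1) * d)) ^ (1 / α) := by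
  set p : ℝ := (2:ℝ) ^ α with hp_def
  have hp1 : 1 < p := by
    rw [hp_def]
    exact (Real.one_lt_rpow_iff_of_pos two_pos).mpr (Or.inl ⟨one_lt_two, hα0⟩)
  have hp0 : 0 < p := lt_trans one_pos hp1
  have hRpos : 0 < (2 ^ (α + 1) * c / ((p - 1) * d)) ^ (1 / α) := by
    apply Real.rpow_pos_of_pos
    exact div_pos (mul_pos (Real.rpow_pos_of_pos two_pos _) hc) (mul_pos (by linarith) hd)
  rcases (h_nonneg 0 ⟨le_refl 0, hd⟩).eq_or_lt with h0 | hu0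
  · rw [← h0]; exact hRpos.le
  have hαne : α ≠ 0 := ne_of_gt hα0
  set β : ℝ := 1 - α with hβ_def
  have hβ0 : (0:ℝ) ≤ β := by rw [hβ_def]; linarith
  have hβ1 : β < 1 := by rw [hβ_def]; linarith
  set lam : ℝ := p⁻¹ with hlam_def
  have hlam0 : 0 < lam := inv_pos.mpr hp0
  have hlam1 : lam < 1 := by
    rw [hlam_def]
    exact inv_lt_one_of_one_lt₀ hp1
  -- key claim
  have key : ∀ T, 0 < T → T < d → u 0 ^ α ≤ 2 * c / ((p - 1) * T) := by
    intro T hT0 hTd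
    have hTmem : T ∈ Set.Ico (0:ℝ) d := ⟨hT0.le, hTd⟩
    set t : ℕ → ℝ := fun n => T * (1 - lam ^ n) with ht_def
    have ht_mem : ∀ n, t n ∈ Set.Ico (0:ℝ) d := by
      intro n
      have h1 : lam ^ n ≤ 1 := pow_le_one₀ hlam0.le hlam1.le
      have h2 : 0 < lam ^ n := pow_pos hlam0 n
      constructor
      · exact mul_nonneg hT0.le (by linarith)
      · have : t n < T := by rw [ht_def]; simp only; nlinarith
        linarith
    have ht_le_T : ∀ n, t n ≤ T := by
      intro n
      have h2 : 0 < lam ^ n := pow_pos hlam0 n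
      rw [ht_def]; simp only; nlinarith
    have ht_lt : ∀ n, t n < t (n+1) := by
      intro n
      have h2 : 0 < lam ^ n := pow_pos hlam0 n
      rw [ht_def]; simp only [pow_succ]
      nlinarith [mul_pos (mul_pos hT0 h2) (show (0:ℝ) < 1 - lam by linarith)]
    have hgpos : ∀ n : ℕ, 0 < T * lam ^ n * (1 - lam) :=
      fun n => mul_pos (mul_pos hT0 (pow_pos hlam0 n)) (by linarith)
    have hgap : ∀ n, t (n+1) - t n = T * lam ^ n * (1 - lam) := by
      intro n; rw [ht_def]; simp only [pow_succ]; ring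
    have hu_pos : ∀ n, 0 < u (t n) :=
      fun n => lt_of_lt_of_le hu0 (h_mono 0 ⟨le_refl 0, hd⟩ (t n) (ht_mem n) (ht_mem n).1)
    set L : ℕ → ℝ := fun n => Real.log (u (t n)) with hL_def
    set w : ℕ → ℝ := fun k => Real.log (c / (T * lam ^ k * (1 - lam))) with hw_def
    have chain : ∀ n, L n ≤ w n + β * L (n+1) := by
      intro n
      have h := h_ineq (t n) (t (n+1)) (ht_mem n).1 (ht_lt n) (ht_mem (n+1)).2
      rw [hgap n] at h
      have hc1 : 0 < c / (T * lam ^ n * (1 - lam)) := div_pos hc (hgpos n)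
      have hr : (0:ℝ) < u (t (n+1)) ^ β := Real.rpow_pos_of_pos (hu_pos (n+1)) _
      calc L n ≤ Real.log (c / (T * lam ^ n * (1 - lam)) * u (t (n+1)) ^ β) :=
            Real.log_le_log (hu_pos n) h
        _ = w n + β * L (n+1) := by
            rw [hw_def, hL_def]
            simp only
            rw [Real.log_mul (ne_of_gt hc1) (ne_of_gt hr), Real.log_rpow (hu_pos (n+1))]
    have ind : ∀ n, L 0 ≤ (∑ k ∈ Finset.range n, β ^ k * w k) + β ^ n * L n := by
      intro n
      induction n with
      | zero => simp
      | succ n ih =>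
        have h2 := mul_le_mul_of_nonneg_left (chain n) (pow_nonneg hβ0 n)
        rw [mul_add] at h2
        rw [Finset.sum_range_succ]
        calc L 0 ≤ (∑ k ∈ Finset.range n, β ^ k * w k) + β ^ n * L n := ih
          _ ≤ (∑ k ∈ Finset.range n, β ^ k * w k) + (β ^ n * w n + β ^ n * (β * L (n+1))) := by
              linarith
          _ = ((∑ k ∈ Finset.range n, β ^ k * w k) + β ^ n * w n) + β ^ (n+1) * L (n+1) := by
              ring
    set Ls : ℝ := Real.log (u T) with hLs_def
    have hLn : ∀ n, L n ≤ Ls :=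
      fun n => Real.log_le_log (hu_pos n) (h_mono (t n) (ht_mem n) T hTmem (ht_le_T n))
    have ind2 : ∀ n, L 0 ≤ (∑ k ∈ Finset.range n, β ^ k * w k) + β ^ n * Ls := by
      intro n
      have h2 := mul_le_mul_of_nonneg_left (hLn n) (pow_nonneg hβ0 n)
      have := ind n
      linarith
    -- sum the series
    have hcT : (0:ℝ) < c / (T * (1 - lam)) := div_pos hc (mul_pos hT0 (by linarith))
    set a : ℝ := Real.log (c / (T * (1 - lam))) with ha_def
    set b : ℝ := - Real.log lam with hb_def
    have hwk : ∀ k : ℕ, β ^ k * w k = a * β ^ k + b * ((k:ℝ) * β ^ k) := by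
      intro k
      have hwval : w k = a + (k:ℝ) * b := by
        rw [hw_def, ha_def, hb_def]
        simp only
        rw [show c / (T * lam ^ k * (1 - lam)) = c / (T * (1 - lam)) * (lam ^ k)⁻¹ by
          field_simp]
        rw [Real.log_mul (ne_of_gt hcT) (by positivity), Real.log_inv, Real.log_pow]
        ring
      rw [hwval]; ring
    have hβnorm : ‖β‖ < 1 := by rw [Real.norm_eq_abs, abs_of_nonneg hβ0]; exact hβ1
    have hs1 : HasSum (fun k : ℕ => a * β ^ k) (a * (1 - β)⁻¹) :=
      (hasSum_geometric_of_lt_one hβ0 hβ1).mul_left a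
    have hs2 : HasSum (fun k : ℕ => b * ((k:ℝ) * β ^ k)) (b * (β / (1 - β) ^ 2)) :=
      (hasSum_coe_mul_geometric_of_norm_lt_one hβnorm).mul_left b
    have hS : HasSum (fun k : ℕ => β ^ k * w k) (a * (1 - β)⁻¹ + b * (β / (1 - β) ^ 2)) := by
      have h := hs1.add hs2
      rw [show (fun k : ℕ => a * β ^ k + b * ((k:ℝ) * β ^ k)) = fun k : ℕ => β ^ k * w k from
        funext fun k => (hwk k).symm] at h
      exact h
    have htend1 := hS.tendsto_sum_nat
    have htend2 : Filter.Tendsto (fun n : ℕ => β ^ n * Ls) Filter.atTop (nhds 0) := by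
      have h := (tendsto_pow_atTop_nhds_zero_of_lt_one hβ0 hβ1).mul_const Ls
      simpa using h
    have hlim : L 0 ≤ (a * (1 - β)⁻¹ + b * (β / (1 - β) ^ 2)) + 0 :=
      ge_of_tendsto (htend1.add htend2) (Filter.Eventually.of_forall ind2)
    -- compute the limit value
    have hKTpos : (0:ℝ) < 2 * c / ((p - 1) * T) := div_pos (by linarith) (mul_pos (by linarith) hT0)
    have hq : p * (2:ℝ) ^ β = 2 := by
      rw [hp_def, ← Real.rpow_add two_pos, show α + β = 1 by rw [hβ_def]; ring, Real.rpow_one]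
    have hKT : c / (T * (1 - lam)) * (2:ℝ) ^ β = 2 * c / ((p - 1) * T) := by
      have h1lam : 1 - lam = (p - 1) / p := by rw [hlam_def]; field_simp
      rw [h1lam]
      have hpne : p ≠ 0 := ne_of_gt hp0
      have hp1ne : p - 1 ≠ 0 := by linarith
      have hTne : T ≠ 0 := ne_of_gt hT0
      field_simp
      linear_combination hq
    have hlogKT : Real.log (2 * c / ((p - 1) * T)) = a + β * Real.log 2 := by
      rw [← hKT, Real.log_mul (ne_of_gt hcT) (ne_of_gt (Real.rpow_pos_of_pos two_pos β)),
        Real.log_rpow two_pos, ha_def]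
    have hb_val : b = α * Real.log 2 := by
      rw [hb_def, hlam_def, Real.log_inv, hp_def, Real.log_rpow two_pos]; ring
    have h1β : 1 - β = α := by rw [hβ_def]; ring
    have hαne : α ≠ 0 := ne_of_gt hα0
    have hSval : (a * (1 - β)⁻¹ + b * (β / (1 - β) ^ 2)) + 0
        = α⁻¹ * Real.log (2 * c / ((p - 1) * T)) := by
      rw [h1β, hb_val, hlogKT]
      field_simp
      ring
    rw [hSval] at hlim
    have hL0eq : L 0 = Real.log (u 0) := by
      rw [hL_def]; simp only
      norm_num [ht_def]
    have hαL : α * Real.log (u 0) ≤ Real.log (2 * c / ((p - 1) * T)) := by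
      have h := mul_le_mul_of_nonneg_left hlim hα0.le
      rw [← mul_assoc, mul_inv_cancel₀ hαne, one_mul] at h
      rwa [hL0eq] at h
    calc u 0 ^ α = Real.exp (Real.log (u 0 ^ α)) :=
          (Real.exp_log (Real.rpow_pos_of_pos hu0 α)).symm
      _ = Real.exp (α * Real.log (u 0)) := by rw [Real.log_rpow hu0]
      _ ≤ Real.exp (Real.log (2 * c / ((p - 1) * T))) := Real.exp_le_exp.mpr hαL
      _ = 2 * c / ((p - 1) * T) := Real.exp_log hKTpos
  -- let T → d
  have hu0α : 0 < u 0 ^ α := Real.rpow_pos_of_pos hu0 α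
  have hKd : u 0 ^ α ≤ 2 * c / ((p - 1) * d) := by
    by_contra hcon
    push_neg at hcon
    have hK : 0 < 2 * c / (p - 1) := div_pos (by linarith) (by linarith)
    have h1 : 2 * c / (p - 1) / u 0 ^ α < d := by
      rw [div_div, div_lt_iff₀ (mul_pos (by linarith : (0:ℝ) < p - 1) hu0α)]
      rw [div_lt_iff₀ (mul_pos (by linarith : (0:ℝ) < p - 1) hd)] at hcon
      have h' : u 0 ^ α * ((p - 1) * d) = d * ((p - 1) * u 0 ^ α) := by ring
      linarith [hcon, h']
    obtain ⟨T, hT1, hT2⟩ := exists_between h1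
    have hT0 : 0 < T := lt_trans (div_pos hK hu0α) hT1
    have hkey := key T hT0 hT2
    rw [div_lt_iff₀ hu0α] at hT1
    rw [div_lt_iff₀ (by linarith : (0:ℝ) < p - 1)] at hT1
    have h2' : 2 * c / ((p - 1) * T) < u 0 ^ α := by
      rw [div_lt_iff₀ (mul_pos (by linarith : (0:ℝ) < p - 1) hT0)]
      have h' : T * u 0 ^ α * (p - 1) = u 0 ^ α * ((p - 1) * T) := by ring
      linarith [hT1, h']
    linarith
  -- finish
  have hstep1 : u 0 ≤ (2 * c / ((p - 1) * d)) ^ (1 / α) := by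
    have h1 : ((u 0 ^ α) : ℝ) ^ (1 / α) ≤ (2 * c / ((p - 1) * d)) ^ (1 / α) :=
      Real.rpow_le_rpow (Real.rpow_pos_of_pos hu0 α).le hKd (by positivity)
    rwa [← Real.rpow_mul hu0.le, mul_one_div, div_self hαne, Real.rpow_one] at h1
  have h2le : (2:ℝ) ≤ 2 ^ (α + 1) := by
    nth_rewrite 1 [show (2:ℝ) = 2 ^ (1:ℝ) by rw [Real.rpow_one]]
    exact Real.rpow_le_rpow_of_exponent_le one_le_two (by linarith)
  have hstep2 : (2 * c / ((p - 1) * d)) ^ (1 / α) ≤ (2 ^ (α + 1) * c / ((p - 1) * d)) ^ (1 / α) := by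
    apply Real.rpow_le_rpow (div_pos (by linarith) (mul_pos (by linarith) hd)).le _ (by positivity)
    exact (div_le_div_iff_of_pos_right (mul_pos (by linarith) hd)).mpr
      (mul_le_mul_of_nonneg_right h2le hc.le)
  exact le_trans hstep1 hstep2
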